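/- Fix d, N, H ∈ ℕ with d ≥ 1, λ > 0, data φ_1,…,φ_N ∈ ℝ^d, r'_1,…,r'_N ∈ ℝ, ψ_1,…,ψ_N ∈ ℝ^d, and a vector ν_0 ∈ ℝ^d. Let w_0, w_1, …, w_{H+1} ∈ ℝ^d be arbitrary vectors with w_{H+1} = 0. Define ŵ_{H+1} := 0 and ŵ_h := R̂ + M̂ŵ_{h+1} for h = H, …, 0, and define ν̂_h := (M̂ᵀ)^h ν_0 for h = 0, …, H. Then the following exact identity holds: ν_0ᵀw_0 − ν_0ᵀŵ_0 = Σ_{h=0}^{H} [ λ ν̂_hᵀΣ̂^{-1}w_h + Σ_{n=1}^{N} ν̂_hᵀΣ̂^{-1}φ_n (φ_nᵀw_h − r'_n − ψ_nᵀw_{h+1}) ]. -/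

import Mathlib

open Matrix Finset

lemma fqi_vecMulVec_mulVec {d : ℕ} (u v x : Fin d → ℝ) :
    vecMulVec u v *ᵥ x = (v ⬝ᵥ x) • u := by
  ext i
  simp [vecMulVec, mulVec, dotProduct, Finset.mul_sum, mul_comm, mul_assoc, mul_left_comm]

lemma fqi_sum_mulVec {d N : ℕ} (A : Fin N → Matrix (Fin d) (Fin d) ℝ) (x : Fin d → ℝ) :
    (∑ n, A n) *ᵥ x = ∑ n, A n *ᵥ x := by
  ext i
  simp [mulVec, dotProduct, Matrix.sum_apply, Finset.sum_mul, Finset.sum_apply]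
  exact Finset.sum_comm

lemma fqi_mulVec_sum {d N : ℕ} (A : Matrix (Fin d) (Fin d) ℝ) (f : Fin N → Fin d → ℝ) :
    A *ᵥ (∑ n, f n) = ∑ n, A *ᵥ f n := by
  ext i
  simp [mulVec, dotProduct, Finset.sum_apply, Finset.mul_sum]
  exact Finset.sum_comm

lemma fqi_dot_sum {d N : ℕ} (v : Fin d → ℝ) (f : Fin N → Fin d → ℝ) :
    v ⬝ᵥ (∑ n, f n) = ∑ n, v ⬝ᵥ f n := by
  simp [dotProduct, Finset.sum_apply, Finset.mul_sum]
  exact Finset.sum_comm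

/-- **Exact error decomposition of the FQI off-policy evaluation error** into a
regularization-bias term and a weighted sum of per-sample Bellman residuals. -/
theorem fqi_error_decomposition (d N H : ℕ) (hd : 1 ≤ d) (lam : ℝ) (hlam : 0 < lam)
    (φ : Fin N → Fin d → ℝ) (r' : Fin N → ℝ) (ψ : Fin N → Fin d → ℝ)
    (ν0 : Fin d → ℝ)
    (Shat : Matrix (Fin d) (Fin d) ℝ)
    (hShat : Shat = lam • (1 : Matrix (Fin d) (Fin d) ℝ) + ∑ n, vecMulVec (φ n) (φ n))
    (Rhat : Fin d → ℝ) (hRhat : Rhat = Shat⁻¹ *ᵥ ∑ n, r' n • φ n)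
    (Mhat : Matrix (Fin d) (Fin d) ℝ)
    (hMhat : Mhat = Shat⁻¹ * ∑ n, vecMulVec (φ n) (ψ n))
    (w : ℕ → Fin d → ℝ) (hw_top : w (H + 1) = 0)
    (what : ℕ → Fin d → ℝ) (hwhat_top : what (H + 1) = 0)
    (hwhat : ∀ h ≤ H, what h = Rhat + Mhat *ᵥ what (h + 1))
    (νhat : ℕ → Fin d → ℝ) (hνhat : ∀ h, νhat h = (Mhatᵀ) ^ h *ᵥ ν0) :
    ν0 ⬝ᵥ w 0 - ν0 ⬝ᵥ what 0
      = ∑ h ∈ Finset.range (H + 1),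
          (lam * (νhat h ⬝ᵥ Shat⁻¹ *ᵥ w h)
            + ∑ n, (νhat h ⬝ᵥ Shat⁻¹ *ᵥ φ n)
                * (φ n ⬝ᵥ w h - r' n - ψ n ⬝ᵥ w (h + 1))) := by
  -- Shat is positive definite
  have hpd : Shat.PosDef := by
    refine posDef_iff_dotProduct_mulVec.mpr ⟨?_, ?_⟩
    · rw [hShat]
      show _ᴴ = _
      ext i j
      simp [Matrix.conjTranspose_apply, Matrix.add_apply, Matrix.sum_apply, vecMulVec_apply,
        Matrix.smul_apply, Matrix.one_apply, eq_comm, mul_comm]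
    · intro x hx
      have hxx : 0 < x ⬝ᵥ x := by
        have h0 : 0 ≤ x ⬝ᵥ x := Finset.sum_nonneg fun i _ => mul_self_nonneg _
        exact h0.lt_of_ne fun h => hx (dotProduct_self_eq_zero.mp h.symm)
      have : star x = x := by simp
      rw [this, hShat, add_mulVec, fqi_sum_mulVec, dotProduct_add, fqi_dot_sum]
      have h1 : x ⬝ᵥ (lam • (1 : Matrix (Fin d) (Fin d) ℝ)) *ᵥ x = lam * (x ⬝ᵥ x) := by
        rw [smul_mulVec, one_mulVec, dotProduct_smul, smul_eq_mul]
      rw [h1]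
      have h2 : ∀ n, x ⬝ᵥ vecMulVec (φ n) (φ n) *ᵥ x = (φ n ⬝ᵥ x) ^ 2 := by
        intro n
        rw [fqi_vecMulVec_mulVec, dotProduct_smul, smul_eq_mul, dotProduct_comm, sq]
      have h3 : (0:ℝ) ≤ ∑ n, x ⬝ᵥ vecMulVec (φ n) (φ n) *ᵥ x := by
        apply Finset.sum_nonneg
        intro n _
        rw [h2 n]
        positivity
      have := mul_pos hlam hxx
      linarith
  have hdet : IsUnit Shat.det := (Matrix.isUnit_iff_isUnit_det _).mp hpd.isUnit
  have hinv : Shat⁻¹ * Shat = 1 := Matrix.nonsing_inv_mul _ hdet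
  have hSw : ∀ v : Fin d → ℝ, Shat⁻¹ *ᵥ (Shat *ᵥ v) = v := by
    intro v
    rw [mulVec_mulVec, hinv, one_mulVec]
  -- residual decomposition
  have hres : ∀ h : ℕ, w h - Rhat - Mhat *ᵥ w (h + 1)
      = Shat⁻¹ *ᵥ (lam • w h + ∑ n, (φ n ⬝ᵥ w h - r' n - ψ n ⬝ᵥ w (h + 1)) • φ n) := by
    intro h
    have hSmul : Shat *ᵥ w h = lam • w h + ∑ n, (φ n ⬝ᵥ w h) • φ n := by
      rw [hShat, add_mulVec, smul_mulVec, one_mulVec, fqi_sum_mulVec]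
      simp only [fqi_vecMulVec_mulVec]
    have h2 : Mhat *ᵥ w (h + 1) = Shat⁻¹ *ᵥ ∑ n, (ψ n ⬝ᵥ w (h + 1)) • φ n := by
      rw [hMhat, ← mulVec_mulVec, fqi_sum_mulVec]
      simp only [fqi_vecMulVec_mulVec]
    calc w h - Rhat - Mhat *ᵥ w (h + 1)
        = Shat⁻¹ *ᵥ (Shat *ᵥ w h) - Shat⁻¹ *ᵥ (∑ n, r' n • φ n)
            - Shat⁻¹ *ᵥ (∑ n, (ψ n ⬝ᵥ w (h + 1)) • φ n) := by
          rw [hSw, hRhat, h2]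
      _ = Shat⁻¹ *ᵥ (Shat *ᵥ w h - (∑ n, r' n • φ n) - ∑ n, (ψ n ⬝ᵥ w (h + 1)) • φ n) := by
          rw [mulVec_sub, mulVec_sub]
      _ = Shat⁻¹ *ᵥ (lam • w h + ∑ n, (φ n ⬝ᵥ w h - r' n - ψ n ⬝ᵥ w (h + 1)) • φ n) := by
          have harg : Shat *ᵥ w h - (∑ n, r' n • φ n) - (∑ n, (ψ n ⬝ᵥ w (h + 1)) • φ n)
              = lam • w h + ∑ n, (φ n ⬝ᵥ w h - r' n - ψ n ⬝ᵥ w (h + 1)) • φ n := by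
            rw [hSmul]
            ext i
            simp [Finset.sum_apply, sub_smul, Finset.sum_sub_distrib]
            ring
          rw [harg]
  -- per-step term
  have hterm : ∀ h : ℕ, νhat h ⬝ᵥ (w h - Rhat - Mhat *ᵥ w (h + 1))
      = lam * (νhat h ⬝ᵥ Shat⁻¹ *ᵥ w h)
        + ∑ n, (νhat h ⬝ᵥ Shat⁻¹ *ᵥ φ n) * (φ n ⬝ᵥ w h - r' n - ψ n ⬝ᵥ w (h + 1)) := by
    intro h
    rw [hres h, mulVec_add, dotProduct_add, fqi_mulVec_sum, fqi_dot_sum]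
    congr 1
    · rw [mulVec_smul, dotProduct_smul, smul_eq_mul]
    · exact Finset.sum_congr rfl fun n _ => by
        rw [mulVec_smul, dotProduct_smul, smul_eq_mul, mul_comm]
  -- transfer through Mhat
  have htrans : ∀ (j : ℕ) (x : Fin d → ℝ), νhat j ⬝ᵥ (Mhat *ᵥ x) = νhat (j + 1) ⬝ᵥ x := by
    intro j x
    rw [hνhat, hνhat, dotProduct_mulVec, ← Matrix.mulVec_transpose, mulVec_mulVec, ← pow_succ']
  -- telescoping
  have htel : ∀ j : ℕ, j ≤ H + 1 →
      ν0 ⬝ᵥ w 0 - ν0 ⬝ᵥ what 0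
        = (∑ h ∈ Finset.range j,
            (lam * (νhat h ⬝ᵥ Shat⁻¹ *ᵥ w h)
              + ∑ n, (νhat h ⬝ᵥ Shat⁻¹ *ᵥ φ n)
                  * (φ n ⬝ᵥ w h - r' n - ψ n ⬝ᵥ w (h + 1))))
          + νhat j ⬝ᵥ (w j - what j) := by
    intro j
    induction j with
    | zero =>
      intro _
      rw [hνhat, pow_zero, one_mulVec, dotProduct_sub]
      simp
    | succ j ih =>
      intro hj
      have hjH : j ≤ H := Nat.lt_succ_iff.mp hj
      rw [ih (le_of_lt (Nat.lt_of_lt_of_le (Nat.lt_succ_self j) hj)),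
        Finset.sum_range_succ, add_assoc]
      congr 1
      have hsplit : w j - what j
          = (w j - Rhat - Mhat *ᵥ w (j + 1)) + Mhat *ᵥ (w (j + 1) - what (j + 1)) := by
        rw [hwhat j hjH, mulVec_sub]
        abel
      rw [hsplit, dotProduct_add, hterm j, htrans j]
  have := htel (H + 1) le_rfl
  rw [hw_top, hwhat_top] at this
  simpa using this
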